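/- Let R be an abelian semi-regular ring with J(R) nilpotent. Then the formal power series ring R[[x]] is right power series-wise McCoy: whenever f, g are non-zero formal power series in R[[x]] with f g = 0, there exists a non-zero element c ∈ R such that f · c = 0 (i.e., every coefficient of f annihilates c on the right). -/

import Mathlib

/-- A ring is *abelian* if every idempotent is central. -/
def IsAbelianRing (R : Type*) [Ring R] : Prop :=
  ∀ e : R, IsIdempotentElem e → ∀ a : R, e * a = a * e

/-- A ring `R` is *semi-regular* if `R/J(R)` is von Neumann regular (for every `a` there is
`b` with `a - a*b*a ∈ J(R)`) and idempotents lift modulo the Jacobson radical `J(R)`. -/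
def IsSemiregularRing (R : Type*) [Ring R] : Prop :=
  (∀ a : R, ∃ b : R, a - a * b * a ∈ (⊥ : Ideal R).jacobson) ∧
  ∀ a : R, a * a - a ∈ (⊥ : Ideal R).jacobson →
    ∃ e : R, IsIdempotentElem e ∧ e - a ∈ (⊥ : Ideal R).jacobson

/-- The Jacobson radical `J(R)` is nilpotent: there is `n > 0` such that every product of `n`
elements of `J(R)` vanishes (i.e. `J(R)^n = 0`). -/
def JacobsonNilpotent (R : Type*) [Ring R] : Prop :=
  ∃ n : ℕ, 0 < n ∧ ∀ l : List R, l.length = n →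
    (∀ x ∈ l, x ∈ (⊥ : Ideal R).jacobson) → l.prod = 0

section Auxiliary

variable {R : Type*} [Ring R]


lemma jac_mul_right {x : R} (hx : x ∈ (⊥ : Ideal R).jacobson) (r : R) :
    x * r ∈ (⊥ : Ideal R).jacobson :=
  Ideal.mul_mem_right r _ hx

lemma jac_left_inv {x : R} (hx : x ∈ (⊥ : Ideal R).jacobson) : ∃ z : R, z * (1 + x) = 1 := by
  obtain ⟨z, hz⟩ := Ideal.mem_jacobson_iff.mp hx 1
  rw [Ideal.mem_bot] at hz
  refine ⟨z, ?_⟩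
  have h2 : z * (1 + x) = z * 1 * x + z := by noncomm_ring
  rw [h2]
  rw [sub_eq_zero] at hz
  exact hz

lemma jac_isUnit_one_add {x : R} (hx : x ∈ (⊥ : Ideal R).jacobson) : IsUnit (1 + x) := by
  obtain ⟨z, hz⟩ := jac_left_inv hx
  have hz2 : z + z * x = 1 := by
    have h : z * (1 + x) = z + z * x := by noncomm_ring
    rwa [h] at hz
  have hz' : 1 + -(z * x) = z := by
    rw [← sub_eq_add_neg]
    exact (eq_sub_of_add_eq hz2).symm
  have hm : -(z * x) ∈ (⊥ : Ideal R).jacobson := neg_mem (Ideal.mul_mem_left _ z hx)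
  obtain ⟨w, hw⟩ := jac_left_inv hm
  rw [hz'] at hw
  have hw2 : w = 1 + x := by
    calc w = w * (z * (1 + x)) := by rw [hz, mul_one]
    _ = (w * z) * (1 + x) := by rw [mul_assoc]
    _ = 1 + x := by rw [hw, one_mul]
  refine ⟨⟨1 + x, z, ?_, hz⟩, rfl⟩
  rw [← hw2]; exact hw

lemma jac_isUnit_of_sub_one_mem {y : R} (hy : y - 1 ∈ (⊥ : Ideal R).jacobson) : IsUnit y := by
  have h := jac_isUnit_one_add hy
  rwa [show (1 : R) + (y - 1) = y by noncomm_ring] at h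

lemma isUnit_mid {u v : R} (h1 : IsUnit (u * v)) (h2 : IsUnit (v * u)) : IsUnit u := by
  obtain ⟨c, hc⟩ := h1.exists_right_inv
  have hd : (↑h2.unit⁻¹ : R) * (v * u) = 1 := by
    have := h2.unit.inv_mul
    rwa [IsUnit.unit_spec] at this
  set d := (↑h2.unit⁻¹ : R)
  have hru : u * (v * c) = 1 := by rw [← mul_assoc]; exact hc
  have hlu : (d * v) * u = 1 := by rw [mul_assoc]; exact hd
  have key : d * v = v * c := by
    calc d * v = (d * v) * (u * (v * c)) := by rw [hru, mul_one]
    _ = ((d * v) * u) * (v * c) := by noncomm_ring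
    _ = v * c := by rw [hlu, one_mul]
  exact ⟨⟨u, v * c, hru, by rw [← key]; exact hlu⟩, rfl⟩

lemma exists_dec (hab : IsAbelianRing R) (hsr : IsSemiregularRing R) (a : R) :
    ∃ (U : Rˣ) (e : R), e * e = e ∧ (∀ b : R, e * b = b * e) ∧
      a - (U : R) * e ∈ (⊥ : Ideal R).jacobson := by
  set J := (⊥ : Ideal R).jacobson with hJ
  obtain ⟨s, hs⟩ := hsr.1 a
  -- idempotent lift of a*s
  have hw : (a * s) * (a * s) - a * s ∈ J := by
    have h : (a * s) * (a * s) - a * s = (-(a - a * s * a)) * s := by noncomm_ring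
    rw [h]; exact jac_mul_right (neg_mem hs) s
  obtain ⟨e, he_idem, he⟩ := hsr.2 (a * s) hw
  have hee : e * e = e := he_idem
  have hec : ∀ b : R, e * b = b * e := hab e he_idem
  -- idempotent lift of s*a
  have hw2 : (s * a) * (s * a) - s * a ∈ J := by
    have h : (s * a) * (s * a) - s * a = s * (-(a - a * s * a)) := by noncomm_ring
    rw [h]; exact Ideal.mul_mem_left _ s (neg_mem hs)
  obtain ⟨e₂, he₂_idem, he₂⟩ := hsr.2 (s * a) hw2
  have he₂c : ∀ b : R, e₂ * b = b * e₂ := hab e₂ he₂_idem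
  -- F1 : e*a - a ∈ J
  have F1 : e * a - a ∈ J := by
    have h : e * a - a = (e - a * s) * a + (-(a - a * s * a)) := by noncomm_ring
    rw [h]; exact add_mem (jac_mul_right he a) (neg_mem hs)
  set u := a * e + 1 - e with hu
  set v := s * e + 1 - e with hv
  -- u * v = (a*s)*e + (1 - e)
  have c4 : (a * e) * (s * e) = (a * s) * e := by
    have h1 : e * (s * e) = (s * e) * e := hec (s * e)
    calc (a * e) * (s * e) = a * (e * (s * e)) := by noncomm_ring
    _ = a * ((s * e) * e) := by rw [h1]
    _ = a * (s * (e * e)) := by noncomm_ring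
    _ = (a * s) * e := by rw [hee]; noncomm_ring
  have c2 : (a * e) * (1 - e) = 0 := by
    have : (a * e) * (1 - e) = a * e - a * (e * e) := by noncomm_ring
    rw [this, hee]; noncomm_ring
  have c1 : (1 - e) * (s * e) = 0 := by
    have h1 : e * (s * e) = (s * e) * e := hec (s * e)
    have : (1 - e) * (s * e) = s * e - e * (s * e) := by noncomm_ring
    rw [this, h1]
    have : (s * e) * e = s * (e * e) := by noncomm_ring
    rw [this, hee]; noncomm_ring
  have c3 : (1 - e) * (1 - e) = 1 - e := by
    have : (1 - e) * (1 - e) = 1 - e - e + e * e := by noncomm_ring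
    rw [this, hee]; noncomm_ring
  have huv : u * v = (a * s) * e + (1 - e) := by
    have hexp : u * v = (a * e) * (s * e) + (a * e) * (1 - e) + (1 - e) * (s * e)
        + (1 - e) * (1 - e) := by rw [hu, hv]; noncomm_ring
    rw [hexp, c4, c2, c1, c3]; noncomm_ring
  have huvJ : u * v - 1 ∈ J := by
    have h : u * v - 1 = (-(e - a * s)) * e + (e * e - e) := by rw [huv]; noncomm_ring
    rw [h, hee]
    simpa using jac_mul_right (neg_mem he) e
  -- v * u = (s*a)*e + (1 - e)
  have d1 : (s * e) * (a * e) = (s * a) * e := by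
    have h1 : e * (a * e) = (a * e) * e := hec (a * e)
    calc (s * e) * (a * e) = s * (e * (a * e)) := by noncomm_ring
    _ = s * ((a * e) * e) := by rw [h1]
    _ = s * (a * (e * e)) := by noncomm_ring
    _ = (s * a) * e := by rw [hee]; noncomm_ring
  have d2 : (s * e) * (1 - e) = 0 := by
    have : (s * e) * (1 - e) = s * e - s * (e * e) := by noncomm_ring
    rw [this, hee]; noncomm_ring
  have d3 : (1 - e) * (a * e) = 0 := by
    have h1 : e * (a * e) = (a * e) * e := hec (a * e)
    have : (1 - e) * (a * e) = a * e - e * (a * e) := by noncomm_ring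
    rw [this, h1]
    have : (a * e) * e = a * (e * e) := by noncomm_ring
    rw [this, hee]; noncomm_ring
  have hvu : v * u = (s * a) * e + (1 - e) := by
    have hexp : v * u = (s * e) * (a * e) + (s * e) * (1 - e) + (1 - e) * (a * e)
        + (1 - e) * (1 - e) := by rw [hu, hv]; noncomm_ring
    rw [hexp, d1, d2, d3, c3]; noncomm_ring
  -- t2 : e₂*(a*s) - a*s ∈ J
  have t2 : e₂ * (a * s) - a * s ∈ J := by
    have h : e₂ * (a * s) = (e₂ * a) * s := by noncomm_ring
    rw [h, he₂c a]
    have h2 : (a * e₂) * s - a * s = a * ((e₂ - s * a) * s) + (-(a - a * s * a)) * s := by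
      noncomm_ring
    rw [h2]
    exact add_mem (Ideal.mul_mem_left _ a (jac_mul_right he₂ s)) (jac_mul_right (neg_mem hs) s)
  -- G2 : e₂*e - e ∈ J
  have G2 : e₂ * e - e ∈ J := by
    have h : e₂ * e - e = e₂ * (e - a * s) + (e₂ * (a * s) - a * s) + (-(e - a * s)) := by
      noncomm_ring
    rw [h]
    exact add_mem (add_mem (Ideal.mul_mem_left _ e₂ he) t2) (neg_mem he)
  have hvuJ : v * u - 1 ∈ J := by
    have h : v * u - 1 = (-(e₂ - s * a)) * e + (e₂ * e - e) := by rw [hvu]; noncomm_ring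
    rw [h]
    exact add_mem (jac_mul_right (neg_mem he₂) e) G2
  have hUuv : IsUnit (u * v) := jac_isUnit_of_sub_one_mem huvJ
  have hUvu : IsUnit (v * u) := jac_isUnit_of_sub_one_mem hvuJ
  have hU : IsUnit u := isUnit_mid hUuv hUvu
  refine ⟨hU.unit, e, hee, hec, ?_⟩
  have hue : (hU.unit : R) * e = a * e := by
    rw [hU.unit_spec, hu]
    have : (a * e + 1 - e) * e = a * (e * e) + e - e * e := by noncomm_ring
    rw [this, hee]; noncomm_ring
  rw [hue, ← hec a]
  have hneg := neg_mem F1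
  rwa [neg_sub] at hneg


def Kpow (J : Ideal R) : ℕ → Ideal R
  | 0 => ⊤
  | k + 1 => Ideal.span {y | ∃ z ∈ J, ∃ w ∈ Kpow J k, y = z * w}

lemma mem_Kpow_step {J : Ideal R} {z w : R} (hz : z ∈ J) {k : ℕ} (hw : w ∈ Kpow J k) :
    z * w ∈ Kpow J (k + 1) :=
  Ideal.subset_span ⟨z, hz, w, hw, rfl⟩

lemma Kpow_succ_le (J : Ideal R) (k : ℕ) : Kpow J (k + 1) ≤ Kpow J k := by
  induction k with
  | zero => exact le_top
  | succ k ih =>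
    show Ideal.span _ ≤ _
    rw [Ideal.span_le]
    rintro y ⟨z, hz, w, hw, rfl⟩
    exact mem_Kpow_step hz (ih hw)

lemma Kpow_le_of_le (J : Ideal R) {s t : ℕ} (h : s ≤ t) : Kpow J t ≤ Kpow J s := by
  induction t with
  | zero => rw [Nat.le_zero.mp h]
  | succ t ih =>
    rcases Nat.lt_or_ge s (t+1) with hlt | hge
    · exact (Kpow_succ_le J t).trans (ih (by omega))
    · rw [Nat.le_antisymm h hge]

lemma Kpow_kill {J : Ideal R} {m : ℕ}
    (hJr : ∀ {x : R}, x ∈ J → ∀ r : R, x * r ∈ J)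
    (hm : ∀ l : List R, l.length = m → (∀ x ∈ l, x ∈ J) → l.prod = 0) :
    ∀ (k : ℕ) (w : R), w ∈ Kpow J k → ∀ l : List R, (∀ x ∈ l, x ∈ J) →
      l.length + k = m → l.prod * w = 0 := by
  intro k
  induction k with
  | zero =>
    intro w _ l hl hlen
    rw [hm l (by simpa using hlen) hl, zero_mul]
  | succ k ih =>
    intro w hw
    induction hw using Submodule.span_induction with
    | mem y hy =>
      obtain ⟨z, hz, w', hw', rfl⟩ := hy
      intro l hl hlen
      have hprod : (l ++ [z]).prod = l.prod * z := by simp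
      have h := ih w' hw' (l ++ [z])
        (by intro x hx; rcases List.mem_append.mp hx with h1 | h2
            · exact hl x h1
            · rw [List.mem_singleton.mp h2]; exact hz)
        (by simp at hlen ⊢; omega)
      rw [hprod] at h
      rw [← mul_assoc]
      exact h
    | zero => intro l _ _; rw [mul_zero]
    | add y₁ y₂ h₁ h₂ ih₁ ih₂ =>
      intro l hl hlen
      rw [mul_add, ih₁ l hl hlen, ih₂ l hl hlen, add_zero]
    | smul r w₁ h₁ ih₁ =>
      intro l hl hlen
      rcases List.eq_nil_or_concat l with rfl | ⟨l₂, b, rfl⟩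
      · have hw₁ : w₁ = 0 := by
          have := ih₁ [] (by simp) (by simpa using hlen)
          simpa using this
        simp [hw₁]
      · -- l = l₂ ++ [b]
        rw [List.concat_eq_append] at hl hlen ⊢
        have hb : b ∈ J := hl b (by simp)
        have hprod : (l₂ ++ [b]).prod = l₂.prod * b := by simp
        have key := ih₁ (l₂ ++ [b * r])
          (by intro x hx; rcases List.mem_append.mp hx with h1 | h2
              · exact hl x (List.mem_append.mpr (Or.inl h1))
              · rw [List.mem_singleton.mp h2]; exact hJr hb r)
          (by simp at hlen ⊢; omega)
        have hprod2 : (l₂ ++ [b * r]).prod = l₂.prod * (b * r) := by simp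
        rw [hprod2] at key
        rw [hprod, smul_eq_mul]
        calc l₂.prod * b * (r * w₁) = (l₂.prod * (b * r)) * w₁ := by noncomm_ring
        _ = 0 := key

lemma Kpow_eq_zero {J : Ideal R} {m : ℕ}
    (hJr : ∀ {x : R}, x ∈ J → ∀ r : R, x * r ∈ J)
    (hm : ∀ l : List R, l.length = m → (∀ x ∈ l, x ∈ J) → l.prod = 0)
    {w : R} (hw : w ∈ Kpow J m) : w = 0 := by
  have := Kpow_kill hJr hm m w hw [] (by simp) (by simp)
  simpa using this

lemma main_induction (J : Ideal R)
    (hJr : ∀ {x : R}, x ∈ J → ∀ r : R, x * r ∈ J)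
    (m : ℕ) (hm : ∀ l : List R, l.length = m → (∀ x ∈ l, x ∈ J) → l.prod = 0)
    (a : ℕ → R) (u : ℕ → Rˣ) (e : ℕ → R)
    (hee : ∀ p, e p * e p = e p) (hc : ∀ p (b : R), e p * b = b * e p)
    (hj : ∀ p, a p - (u p : R) * e p ∈ J) :
    ∀ (d : ℕ) (x : ℕ → R), (∀ q, x q ∈ Kpow J (m - d)) →
      (∀ n : ℕ, ∑ pq ∈ Finset.HasAntidiagonal.antidiagonal n, a pq.1 * x pq.2 = 0) →
      (∃ q, x q ≠ 0) → ∃ c : R, c ≠ 0 ∧ ∀ p, a p * c = 0 := by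
  intro d
  induction d with
  | zero =>
    intro x hx _ hnz
    exfalso
    obtain ⟨q, hq⟩ := hnz
    exact hq (Kpow_eq_zero hJr hm (by simpa using hx q))
  | succ d ih =>
    intro x hx heq hnz
    set jj : ℕ → R := fun p => a p - (u p : R) * e p with hjj
    have hadecomp : ∀ p, a p = (u p : R) * e p + jj p := fun p => by rw [hjj]; ring_nf; noncomm_ring
    have hswap : ∀ p (b y : R), e p * (b * y) = b * (e p * y) := by
      intro p b y
      rw [hc p (b * y), mul_assoc, ← hc p y]
    -- Sub-lemma: e p * x q ∈ Kpow J (m - (d+1) + 1)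
    have SL : ∀ n p q, p + q = n → e p * x q ∈ Kpow J (m - (d+1) + 1) := by
      intro n
      induction n using Nat.strong_induction_on with
      | _ n ihn =>
        intro p
        induction p using Nat.strong_induction_on with
        | _ p ihp =>
          intro q hpq
          set KK := Kpow J (m - (d+1) + 1) with hKK
          -- membership for off-diagonal terms
          have hterm : ∀ i j : ℕ, i + j = n → i ≠ p → e p * (a i * x j) ∈ KK := by
            intro i j hij hne
            have hsplit : e p * (a i * x j)
                = (u i : R) * (e p * (e i * x j)) + e p * (jj i * x j) := by
              calc e p * (a i * x j)
                  = e p * (((u i : R) * e i + jj i) * x j) := by rw [← hadecomp i]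
                _ = e p * ((u i : R) * (e i * x j)) + e p * (jj i * x j) := by noncomm_ring
                _ = (u i : R) * (e p * (e i * x j)) + e p * (jj i * x j) := by
                      rw [hswap p ((u i : R)) (e i * x j)]
            have hmem2 : e p * (jj i * x j) ∈ KK :=
              Ideal.mul_mem_left _ _ (mem_Kpow_step (hj i) (hx j))
            rw [hsplit]
            refine add_mem ?_ hmem2
            rcases lt_or_gt_of_ne hne with hlt | hgt
            · -- i < p : inner IH
              have h1 : e i * x j ∈ KK := ihp i hlt j (by omega)
              exact Ideal.mul_mem_left _ _ (Ideal.mul_mem_left _ _ h1)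
            · -- i > p : outer IH at p + j < n
              have h1 : e p * x j ∈ KK := ihn (p + j) (by omega) p j rfl
              have h2 : e p * (e i * x j) = e i * (e p * x j) := hswap p (e i) (x j)
              rw [h2]
              exact Ideal.mul_mem_left _ _ (Ideal.mul_mem_left _ _ h1)
          have hpq' : (p, q) ∈ Finset.HasAntidiagonal.antidiagonal n := Finset.HasAntidiagonal.mem_antidiagonal.mpr hpq
          have hsum : ∑ pq ∈ Finset.HasAntidiagonal.antidiagonal n, e p * (a pq.1 * x pq.2) = 0 := by
            rw [← Finset.mul_sum, heq n, mul_zero]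
          have hsplit_sum : ∑ pq ∈ Finset.HasAntidiagonal.antidiagonal n, e p * (a pq.1 * x pq.2)
              = e p * (a p * x q)
              + ∑ pq ∈ (Finset.HasAntidiagonal.antidiagonal n).erase (p, q), e p * (a pq.1 * x pq.2) :=
            (Finset.add_sum_erase _ (fun pq => e p * (a pq.1 * x pq.2)) hpq').symm
          have hsum' : e p * (a p * x q)
              + ∑ pq ∈ (Finset.HasAntidiagonal.antidiagonal n).erase (p, q), e p * (a pq.1 * x pq.2) = 0 := by
            rw [← hsplit_sum]; exact hsum
          have hrest : ∑ pq ∈ (Finset.HasAntidiagonal.antidiagonal n).erase (p, q),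
              e p * (a pq.1 * x pq.2) ∈ KK := by
            refine Ideal.sum_mem _ fun pq hpq2 => ?_
            have hmem := Finset.mem_of_mem_erase hpq2
            have hne := Finset.ne_of_mem_erase hpq2
            have hij : pq.1 + pq.2 = n := Finset.HasAntidiagonal.mem_antidiagonal.mp hmem
            refine hterm pq.1 pq.2 hij fun h1 => hne ?_
            have : pq.2 = q := by omega
            exact Prod.ext h1 this
          have hp_term : e p * (a p * x q) ∈ KK := by
            have h : e p * (a p * x q) = -(∑ pq ∈ (Finset.HasAntidiagonal.antidiagonal n).erase (p, q),
                e p * (a pq.1 * x pq.2)) := by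
              rw [eq_neg_iff_add_eq_zero]; exact hsum'
            rw [h]; exact neg_mem hrest
          have hps : e p * (a p * x q)
              = (u p : R) * (e p * x q) + e p * (jj p * x q) := by
            calc e p * (a p * x q)
                = e p * (((u p : R) * e p + jj p) * x q) := by rw [← hadecomp p]
              _ = e p * (((u p : R) * e p) * x q) + e p * (jj p * x q) := by noncomm_ring
              _ = ((u p : R) * e p) * (e p * x q) + e p * (jj p * x q) := by
                    rw [hswap p ((u p : R) * e p) (x q)]
              _ = (u p : R) * ((e p * e p) * x q) + e p * (jj p * x q) := by noncomm_ring
              _ = (u p : R) * (e p * x q) + e p * (jj p * x q) := by rw [hee p]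
          have hmem2 : e p * (jj p * x q) ∈ KK :=
            Ideal.mul_mem_left _ _ (mem_Kpow_step (hj p) (hx q))
          have hup : (u p : R) * (e p * x q) ∈ KK := by
            have h : (u p : R) * (e p * x q)
                = e p * (a p * x q) - e p * (jj p * x q) := by rw [hps]; abel
            rw [h]; exact sub_mem hp_term hmem2
          have : e p * x q = ((u p)⁻¹ : Rˣ) * ((u p : R) * (e p * x q)) := by
            rw [← mul_assoc, Units.inv_mul, one_mul]
          rw [this]
          exact Ideal.mul_mem_left _ _ hup
    by_cases hA : ∃ p₀ q₀, e p₀ * x q₀ ≠ 0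
    · obtain ⟨p₀, q₀, hA0⟩ := hA
      refine ih (fun q => e p₀ * x q) ?_ ?_ ⟨q₀, hA0⟩
      · intro q
        exact Kpow_le_of_le J (by omega) (SL (p₀ + q) p₀ q rfl)
      · intro n
        have : ∀ pq : ℕ × ℕ, a pq.1 * (e p₀ * x pq.2) = e p₀ * (a pq.1 * x pq.2) :=
          fun pq => (hswap p₀ (a pq.1) (x pq.2)).symm
        calc ∑ pq ∈ Finset.HasAntidiagonal.antidiagonal n, a pq.1 * (e p₀ * x pq.2)
            = ∑ pq ∈ Finset.HasAntidiagonal.antidiagonal n, e p₀ * (a pq.1 * x pq.2) :=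
              Finset.sum_congr rfl fun pq _ => this pq
          _ = e p₀ * ∑ pq ∈ Finset.HasAntidiagonal.antidiagonal n, a pq.1 * x pq.2 := by
              rw [Finset.mul_sum]
          _ = 0 := by rw [heq n, mul_zero]
    · push_neg at hA
      set P : ℕ → Prop := fun t => ∀ l : List R, l.length = t → (∀ y ∈ l, y ∈ J) →
        ∀ q, l.prod * x q = 0 with hP
      have hPm : P m := fun l hl hly q => by rw [hm l hl hly, zero_mul]
      haveI : DecidablePred P := Classical.decPred P
      have hex : ∃ t, P t := ⟨m, hPm⟩
      have ht : P (Nat.find hex) := Nat.find_spec hex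
      have ht0 : Nat.find hex ≠ 0 := by
        intro h0
        obtain ⟨q, hq⟩ := hnz
        apply hq
        have h1 := ht
        rw [h0] at h1
        have := h1 [] rfl (by simp) q
        simpa using this
      have htm1 : ¬ (∀ l : List R, l.length = Nat.find hex - 1 → (∀ y ∈ l, y ∈ J) →
          ∀ q, l.prod * x q = 0) := Nat.find_min hex (by omega)
      push_neg at htm1
      obtain ⟨l, hlen, hent, q₁, hcne⟩ := htm1
      refine ⟨l.prod * x q₁, hcne, fun p => ?_⟩
      have h1 : e p * (l.prod * x q₁) = 0 := by
        rw [hswap p l.prod (x q₁), hA p q₁, mul_zero]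
      have h2 : (jj p * l.prod) * x q₁ = 0 := by
        have hl2 : (jj p :: l).prod = jj p * l.prod := List.prod_cons
        have := ht (jj p :: l) (by simp [hlen]; omega)
          (by intro y hy
              rcases List.mem_cons.mp hy with rfl | hmem
              · exact hj p
              · exact hent y hmem) q₁
        rwa [hl2] at this
      calc a p * (l.prod * x q₁)
          = ((u p : R) * e p + jj p) * (l.prod * x q₁) := by rw [← hadecomp p]
        _ = (u p : R) * (e p * (l.prod * x q₁)) + (jj p * l.prod) * x q₁ := by noncomm_ring
        _ = 0 := by rw [h1, h2, mul_zero, add_zero]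

end Auxiliary

/-- Let `R` be an abelian semi-regular ring with `J(R)` nilpotent.  Then `R` is right power
series-wise McCoy: if `f * g = 0` in `R[[x]]` with `f, g ≠ 0`, then there is a non-zero
`c ∈ R` with every coefficient of `f` annihilating `c` on the right. -/
theorem powerSeries_right_mccoy (R : Type*) [Ring R]
    (hab : IsAbelianRing R) (hsr : IsSemiregularRing R) (hnil : JacobsonNilpotent R)
    (f g : PowerSeries R) (hf : f ≠ 0) (hg : g ≠ 0) (hfg : f * g = 0) :
    ∃ c : R, c ≠ 0 ∧ ∀ n : ℕ, PowerSeries.coeff n f * c = 0 := by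
  obtain ⟨m, hm0, hm⟩ := hnil
  have hJr : ∀ {x : R}, x ∈ (⊥ : Ideal R).jacobson → ∀ r : R,
      x * r ∈ (⊥ : Ideal R).jacobson := fun hx r => jac_mul_right hx r
  have hdec : ∀ p : ℕ, ∃ (U : Rˣ) (e : R), e * e = e ∧ (∀ b : R, e * b = b * e) ∧
      (PowerSeries.coeff p f) - (U : R) * e ∈ (⊥ : Ideal R).jacobson :=
    fun p => exists_dec hab hsr _
  choose u e hee hc hj using hdec
  have heq : ∀ n : ℕ, ∑ pq ∈ Finset.HasAntidiagonal.antidiagonal n,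
      PowerSeries.coeff pq.1 f * PowerSeries.coeff pq.2 g = 0 := by
    intro n
    rw [← PowerSeries.coeff_mul, hfg, map_zero]
  have hnz : ∃ q, PowerSeries.coeff q g ≠ 0 := by
    by_contra h
    push_neg at h
    exact hg (PowerSeries.ext fun n => by rw [h n, map_zero])
  exact main_induction (⊥ : Ideal R).jacobson hJr m hm
    (fun p => PowerSeries.coeff p f) u e hee hc hj m
    (fun q => PowerSeries.coeff q g)
    (by intro q
        have h0 : m - m = 0 := Nat.sub_self m
        rw [h0]
        exact Submodule.mem_top)
    heq hnz
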